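/- Let Y be an Esakia space and X a dense subspace of Y that is an upset of Y. Then X with induced order and topology is continuously ordered: ↑x is closed in X for each x ∈ X, and for every open U ⊆ X the set ↓_X U is open in X. -/
import Mathlib


/-- Let `Y` be an Esakia space and `X` a dense subset of `Y` that is an upset.
Then `X`, with the subspace topology and induced order, is continuously ordered:
`↑x` is closed in `X` for each `x ∈ X`, and `↓_X U` is open in `X` for every open
`U ⊆ X`. -/
theorem dense_upset_of_esakia_continuously_ordered
    {Y : Type*} [TopologicalSpace Y] [PartialOrder Y] [CompactSpace Y] [T2Space Y]
    (hzd : TopologicalSpace.IsTopologicalBasis {s : Set Y | IsClopen s})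
    (hpries : ∀ x y : Y, ¬ x ≤ y →
      ∃ U : Set Y, IsClopen U ∧ IsUpperSet U ∧ x ∈ U ∧ y ∉ U)
    (hdownY : ∀ V : Set Y, IsOpen V → IsOpen {y : Y | ∃ v ∈ V, y ≤ v})
    (X : Set Y) (hdense : Dense X) (hupset : IsUpperSet X) :
    (∀ x : X, IsClosed (Set.Ici x)) ∧
    (∀ U : Set X, IsOpen U → IsOpen {x : X | ∃ u ∈ U, x ≤ u}) := by
  constructor
  · intro x
    have hclY : IsClosed (Set.Ici (x : Y)) := by
      rw [← isOpen_compl_iff]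
      rw [isOpen_iff_forall_mem_open]
      intro y hy
      obtain ⟨U, hU, hup, hxU, hyU⟩ := hpries (x : Y) y hy
      exact ⟨Uᶜ, fun z hz hz' => hz (hup hz' hxU), hU.1.isOpen_compl, hyU⟩
    have : Set.Ici x = Subtype.val ⁻¹' Set.Ici (x : Y) := rfl
    rw [this]
    exact hclY.preimage continuous_subtype_val
  · intro U hU
    obtain ⟨V, hV, rfl⟩ := hU
    have : {x : X | ∃ u ∈ Subtype.val ⁻¹' V, x ≤ u}
        = Subtype.val ⁻¹' {y : Y | ∃ v ∈ V, y ≤ v} := by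
      ext x
      constructor
      · rintro ⟨u, hu, hxu⟩
        exact ⟨u, hu, hxu⟩
      · rintro ⟨v, hv, hxv⟩
        exact ⟨⟨v, hupset hxv x.2⟩, hv, hxv⟩
    rw [this]
    exact (hdownY V hV).preimage continuous_subtype_val
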